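/- Let β1, β2 ∈ (0,1). Then the maximum of F_u(μ,β1,β2) over μ ∈ [0,1] satisfies max_{0≤μ≤1} F_u(μ,β1,β2) ≤ |β1−β2|·(1−min{β1,β2})/(1−β1·β2) − ln((1−β1·β2)/(2−β1−β2)), with equality if and only if β1 = β2. -/
import Mathlib


/-- F_u(μ,β1,β2) = −(μ·ln((1−μ)·β1 + μ) + (1−μ)·ln(μ·β2 + (1−μ))). -/
noncomputable def Fu (μ β1 β2 : ℝ) : ℝ :=
  -(μ * Real.log ((1 - μ) * β1 + μ) + (1 - μ) * Real.log (μ * β2 + (1 - μ)))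

lemma gapG (s t : ℝ) (h0 : 0 < s) (hst : s ≤ t) (h1 : t < 1) :
    (t-s)*(1-s^2*t^2) < (2-s^2-t^2)*(t+s)*(1-s^2) := by
  have ht : 0 < t := h0.trans_le hst
  have hs1 : s < 1 := hst.trans_lt h1
  nlinarith [mul_pos h0 (mul_pos (sub_pos.2 hs1) (sub_pos.2 h1)),
    mul_pos (mul_pos ht (sub_pos.2 h1)) (sub_pos.2 h1),
    mul_nonneg (mul_nonneg (sub_nonneg.2 hst) h0.le) ht.le,
    mul_pos (mul_pos h0 ht) (sub_pos.2 h1),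
    mul_nonneg (mul_nonneg (sub_nonneg.2 hst) (sub_nonneg.2 h1.le)) ht.le,
    mul_pos h0 ht, sq_nonneg (s-t), sq_nonneg (s+t-1),
    mul_pos (mul_pos h0 h0) ht, mul_nonneg (mul_nonneg h0.le h0.le) (sub_nonneg.2 hst)]

lemma lemB (β1 β2 : ℝ) (hβ1 : β1 ∈ Set.Ioo (0:ℝ) 1) (hβ2 : β2 ∈ Set.Ioo (0:ℝ) 1)
    (h12 : β1 ≤ β2) :
    (Real.sqrt β2 - Real.sqrt β1)^2/(2-β1-β2) ≤ (β2-β1)*(1-β1)/(1-β1*β2) := by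
  obtain ⟨hb10, hb11⟩ := hβ1
  obtain ⟨hb20, hb21⟩ := hβ2
  have hs2 : (Real.sqrt β1)^2 = β1 := Real.sq_sqrt hb10.le
  have ht2 : (Real.sqrt β2)^2 = β2 := Real.sq_sqrt hb20.le
  have hs0 : 0 < Real.sqrt β1 := Real.sqrt_pos.2 hb10
  have hst : Real.sqrt β1 ≤ Real.sqrt β2 := Real.sqrt_le_sqrt h12
  set s := Real.sqrt β1 with hs_def
  set t := Real.sqrt β2 with ht_def
  clear_value s t
  have ht1 : t < 1 := by nlinarith [hs0.trans_le hst]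
  have hS : (0:ℝ) < 2 - β1 - β2 := by linarith
  have hP : (0:ℝ) < 1 - β1*β2 := by nlinarith [mul_pos hb10 (sub_pos.2 hb21)]
  rw [div_le_div_iff₀ hS hP, ← hs2, ← ht2]
  have hG := mul_le_mul_of_nonneg_left (gapG s t hs0 hst ht1).le (sub_nonneg.2 hst)
  nlinarith [hG]

lemma lemBs (β1 β2 : ℝ) (hβ1 : β1 ∈ Set.Ioo (0:ℝ) 1) (hβ2 : β2 ∈ Set.Ioo (0:ℝ) 1)
    (h12 : β1 < β2) :
    (Real.sqrt β2 - Real.sqrt β1)^2/(2-β1-β2) < (β2-β1)*(1-β1)/(1-β1*β2) := by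
  obtain ⟨hb10, hb11⟩ := hβ1
  obtain ⟨hb20, hb21⟩ := hβ2
  have hs2 : (Real.sqrt β1)^2 = β1 := Real.sq_sqrt hb10.le
  have ht2 : (Real.sqrt β2)^2 = β2 := Real.sq_sqrt hb20.le
  have hs0 : 0 < Real.sqrt β1 := Real.sqrt_pos.2 hb10
  have hst : Real.sqrt β1 < Real.sqrt β2 := Real.sqrt_lt_sqrt hb10.le h12
  set s := Real.sqrt β1 with hs_def
  set t := Real.sqrt β2 with ht_def
  clear_value s t
  have ht1 : t < 1 := by nlinarith [hs0.trans hst]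
  have hS : (0:ℝ) < 2 - β1 - β2 := by linarith
  have hP : (0:ℝ) < 1 - β1*β2 := by nlinarith [mul_pos hb10 (sub_pos.2 hb21)]
  rw [div_lt_div_iff₀ hS hP, ← hs2, ← ht2]
  have hG := mul_lt_mul_of_pos_left (gapG s t hs0 hst.le ht1) (sub_pos.2 hst)
  nlinarith [hG]

lemma lemB' (β1 β2 : ℝ) (hβ1 : β1 ∈ Set.Ioo (0:ℝ) 1) (hβ2 : β2 ∈ Set.Ioo (0:ℝ) 1) :
    (Real.sqrt β2 - Real.sqrt β1)^2/(2-β1-β2)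
      ≤ |β1 - β2| * (1 - min β1 β2) / (1 - β1*β2) := by
  rcases le_total β1 β2 with h | h
  · rw [abs_sub_comm, abs_of_nonneg (sub_nonneg.2 h), min_eq_left h]
    exact lemB β1 β2 hβ1 hβ2 h
  · rw [abs_of_nonneg (sub_nonneg.2 h), min_eq_right h]
    have := lemB β2 β1 hβ2 hβ1 h
    have e1 : (Real.sqrt β1 - Real.sqrt β2)^2 = (Real.sqrt β2 - Real.sqrt β1)^2 := by ring
    have e2 : (2:ℝ)-β2-β1 = 2-β1-β2 := by ring
    have e3 : β2*β1 = β1*β2 := by ring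
    rw [e1, e2, e3] at this
    exact this

lemma lemB's (β1 β2 : ℝ) (hβ1 : β1 ∈ Set.Ioo (0:ℝ) 1) (hβ2 : β2 ∈ Set.Ioo (0:ℝ) 1)
    (hne : β1 ≠ β2) :
    (Real.sqrt β2 - Real.sqrt β1)^2/(2-β1-β2)
      < |β1 - β2| * (1 - min β1 β2) / (1 - β1*β2) := by
  rcases lt_or_gt_of_ne hne with h | h
  · rw [abs_sub_comm, abs_of_nonneg (sub_nonneg.2 h.le), min_eq_left h.le]
    exact lemBs β1 β2 hβ1 hβ2 h
  · rw [abs_of_nonneg (sub_nonneg.2 h.le), min_eq_right h.le]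
    have := lemBs β2 β1 hβ2 hβ1 h
    have e1 : (Real.sqrt β1 - Real.sqrt β2)^2 = (Real.sqrt β2 - Real.sqrt β1)^2 := by ring
    have e2 : (2:ℝ)-β2-β1 = 2-β1-β2 := by ring
    have e3 : β2*β1 = β1*β2 := by ring
    rw [e1, e2, e3] at this
    exact this

lemma lemA (β1 β2 μ : ℝ) (hβ1 : β1 ∈ Set.Ioo (0:ℝ) 1) (hβ2 : β2 ∈ Set.Ioo (0:ℝ) 1)
    (hμ0 : 0 ≤ μ) (hμ1 : μ ≤ 1) :
    Fu μ β1 β2 ≤ (Real.sqrt β2 - Real.sqrt β1)^2/(2-β1-β2)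
       - Real.log ((1-β1*β2)/(2-β1-β2)) := by
  obtain ⟨hb10, hb11⟩ := hβ1
  obtain ⟨hb20, hb21⟩ := hβ2
  have hs2 : (Real.sqrt β1)^2 = β1 := Real.sq_sqrt hb10.le
  have ht2 : (Real.sqrt β2)^2 = β2 := Real.sq_sqrt hb20.le
  have hs0 : 0 < Real.sqrt β1 := Real.sqrt_pos.2 hb10
  have ht0 : 0 < Real.sqrt β2 := Real.sqrt_pos.2 hb20
  set s := Real.sqrt β1 with hs_def
  set t := Real.sqrt β2 with ht_def
  clear_value s t
  have hs1 : s < 1 := by nlinarith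
  have ht1 : t < 1 := by nlinarith
  have hst1 : s*t < 1 := (mul_lt_of_lt_one_right hs0 ht1).trans hs1
  have hstp : (0:ℝ) < 1 + s*t := by nlinarith [mul_pos hs0 ht0]
  have hS : (0:ℝ) < 2 - β1 - β2 := by linarith
  have hP : (0:ℝ) < 1 - β1*β2 := by nlinarith [mul_pos hb10 (sub_pos.2 hb21)]
  set a := (1-μ)*β1 + μ with ha_def
  set b := μ*β2 + (1-μ) with hb_def
  have ha : 0 < a := by
    have : β1 ≤ a := by rw [ha_def]; nlinarith [mul_nonneg hμ0 (sub_nonneg.2 hb11.le)]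
    linarith
  have hb : 0 < b := by
    have : β2 ≤ b := by
      rw [hb_def]; nlinarith [mul_nonneg (sub_nonneg.2 hμ1) (sub_nonneg.2 hb21.le)]
    linarith
  set D := (1-β1*β2)/(2-β1-β2) with hD_def
  have hD : 0 < D := div_pos hP hS
  have l1 : Real.log D - Real.log a ≤ D/a - 1 := by
    have := Real.log_le_sub_one_of_pos (div_pos hD ha)
    rwa [Real.log_div hD.ne' ha.ne'] at this
  have l2 : Real.log D - Real.log b ≤ D/b - 1 := by
    have := Real.log_le_sub_one_of_pos (div_pos hD hb)
    rwa [Real.log_div hD.ne' hb.ne'] at this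
  have m1 : μ * (Real.log D - Real.log a) ≤ μ * (D/a - 1) :=
    mul_le_mul_of_nonneg_left l1 hμ0
  have m2 : (1-μ) * (Real.log D - Real.log b) ≤ (1-μ) * (D/b - 1) :=
    mul_le_mul_of_nonneg_left l2 (by linarith)
  have hsum : μ/a + (1-μ)/b ≤ 2/(1+s*t) := by
    rw [div_add_div _ _ ha.ne' hb.ne', div_le_div_iff₀ (mul_pos ha hb) hstp]
    rw [ha_def, hb_def, ← hs2, ← ht2]
    nlinarith [mul_nonneg (sub_nonneg.2 hst1.le) (sq_nonneg ((s+t)*μ-s))]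
  have m3 : D*(μ/a + (1-μ)/b) ≤ D*(2/(1+s*t)) := mul_le_mul_of_nonneg_left hsum hD.le
  have step3 : D*(2/(1+s*t)) - 1 = (t-s)^2/(2-β1-β2) := by
    rw [hD_def, ← hs2, ← ht2]
    have h1 : (2:ℝ) - s^2 - t^2 ≠ 0 := by rw [hs2, ht2]; linarith
    field_simp
    ring
  have hFu : Fu μ β1 β2 ≤ D*(2/(1+s*t)) - 1 - Real.log D := by
    show -(μ * Real.log a + (1-μ) * Real.log b) ≤ _
    have e1 : μ * (D/a - 1) = D*(μ/a) - μ := by ring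
    have e2 : (1-μ) * (D/b - 1) = D*((1-μ)/b) - (1-μ) := by ring
    have e3 : D*(μ/a + (1-μ)/b) = D*(μ/a) + D*((1-μ)/b) := by ring
    rw [e1] at m1; rw [e2] at m2; rw [e3] at m3
    have e4 : μ * (Real.log D - Real.log a) = μ * Real.log D - μ * Real.log a := by ring
    have e5 : (1-μ) * (Real.log D - Real.log b)
        = Real.log D - μ * Real.log D - (1-μ) * Real.log b := by ring
    rw [e4] at m1; rw [e5] at m2
    linarith
  rw [step3] at hFu
  linarith [hFu]


theorem Fu_max_upper_bound (β1 β2 : ℝ) (hβ1 : β1 ∈ Set.Ioo (0:ℝ) 1)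
    (hβ2 : β2 ∈ Set.Ioo (0:ℝ) 1) :
    (⨆ μ : Set.Icc (0:ℝ) 1, Fu μ β1 β2) ≤
        |β1 - β2| * (1 - min β1 β2) / (1 - β1 * β2) -
          Real.log ((1 - β1 * β2) / (2 - β1 - β2)) ∧
      ((⨆ μ : Set.Icc (0:ℝ) 1, Fu μ β1 β2) =
          |β1 - β2| * (1 - min β1 β2) / (1 - β1 * β2) -
            Real.log ((1 - β1 * β2) / (2 - β1 - β2)) ↔ β1 = β2) := by
  haveI : Nonempty (Set.Icc (0:ℝ) 1) := ⟨⟨0, by norm_num⟩⟩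
  have bound : ∀ x : Set.Icc (0:ℝ) 1, Fu x β1 β2 ≤
      (Real.sqrt β2 - Real.sqrt β1)^2/(2-β1-β2)
        - Real.log ((1-β1*β2)/(2-β1-β2)) :=
    fun x => lemA β1 β2 x hβ1 hβ2 x.2.1 x.2.2
  have hsupC : (⨆ μ : Set.Icc (0:ℝ) 1, Fu μ β1 β2) ≤
      (Real.sqrt β2 - Real.sqrt β1)^2/(2-β1-β2)
        - Real.log ((1-β1*β2)/(2-β1-β2)) := ciSup_le bound
  have h1 : (⨆ μ : Set.Icc (0:ℝ) 1, Fu μ β1 β2) ≤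
      |β1 - β2| * (1 - min β1 β2) / (1 - β1 * β2) -
        Real.log ((1 - β1 * β2) / (2 - β1 - β2)) := by
    have := lemB' β1 β2 hβ1 hβ2
    linarith
  refine ⟨h1, ?_, ?_⟩
  · intro heq
    by_contra hne
    have hstrict := lemB's β1 β2 hβ1 hβ2 hne
    linarith
  · intro heq
    subst heq
    obtain ⟨hb10, hb11⟩ := hβ1
    refine le_antisymm h1 ?_
    have hbdd : BddAbove (Set.range fun μ : Set.Icc (0:ℝ) 1 => Fu μ β1 β1) := by
      refine ⟨(Real.sqrt β1 - Real.sqrt β1)^2/(2-β1-β1)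
        - Real.log ((1-β1*β1)/(2-β1-β1)), ?_⟩
      rintro y ⟨x, rfl⟩
      exact bound x
    have hle := le_ciSup hbdd (⟨1/2, by norm_num⟩ : Set.Icc (0:ℝ) 1)
    have hval : Fu ((⟨1/2, by norm_num⟩ : Set.Icc (0:ℝ) 1) : ℝ) β1 β1 =
        |β1 - β1| * (1 - min β1 β1) / (1 - β1 * β1) -
          Real.log ((1 - β1 * β1) / (2 - β1 - β1)) := by
      have hS : (2:ℝ) - β1 - β1 ≠ 0 := by linarith
      have harg1 : (1-(1/2:ℝ))*β1 + (1/2:ℝ) = (1-β1*β1)/(2-β1-β1) := by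
        rw [eq_div_iff hS]; ring
      have harg2 : (1/2:ℝ)*β1 + (1-(1/2:ℝ)) = (1-β1*β1)/(2-β1-β1) := by
        rw [eq_div_iff hS]; ring
      show Fu (1/2) β1 β1 = _
      simp only [Fu, harg1, harg2, sub_self, abs_zero, zero_mul, zero_div, zero_sub]
      ring
    rw [hval] at hle
    exact hle
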